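/- Let π be a partition in C(3,3) such that π has at least one odd part. Then there exists a unique m ≥ 0 such that π ∈ C_=(3,3|m). -/

import Mathlib

namespace Bressoud

/-- A partition: a weakly decreasing list of positive integers. -/
structure Partition where
  parts : List ℕ
  pos : ∀ x ∈ parts, 0 < x
  sorted : parts.Pairwise (· ≥ ·)

namespace Partition

/-- `|π|`, the sum of the parts of `π`. -/
def size (π : Partition) : ℕ := π.parts.sum

/-- `ℓ(π)`, the number of parts of `π`. -/
def numParts (π : Partition) : ℕ := π.parts.length

end Partition

lemma exists_pos_not_mem (s : List ℕ) : ∃ n, 0 < n ∧ n ∉ s := by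
  refine ⟨s.sum + 1, Nat.succ_pos _, fun h => ?_⟩
  have := List.single_le_sum (l := s) (fun x _ => Nat.zero_le x) _ h
  omega

/-- The least positive integer not occurring in `s`. -/
def mex1 (s : List ℕ) : ℕ := Nat.find (exists_pos_not_mem s)

/-- Parts `p ≥ q` conflict (must receive different marks) when `p - q ≤ 2`,
with strict inequality when `p` is odd. -/
def conflict (p q : ℕ) : Bool :=
  if p % 2 = 1 then decide (p - q < 2) else decide (p - q ≤ 2)

/-- Greedy computation of the Göllnitz–Gordon marking: the parts are processed
from smallest to largest (second argument: remaining parts in increasing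
order; first argument: already processed parts with their marks), and each
part receives the least positive mark different from the marks of all already
processed conflicting parts. -/
def ggAux : List (ℕ × ℕ) → List ℕ → List (ℕ × ℕ)
  | acc, [] => acc
  | acc, p :: rest =>
      ggAux ((p, mex1 ((acc.filter fun q => conflict p q.1).map Prod.snd)) :: acc) rest

/-- The Göllnitz–Gordon marking `GG(π)` of `π`, as a list of (part, mark)
pairs in decreasing order of parts. -/
def ggMarks (π : Partition) : List (ℕ × ℕ) := ggAux [] π.parts.reverse

/-- There is an `m`-marked part equal to `x` in `GG(π)`. -/
def Marked (π : Partition) (x m : ℕ) : Prop := (x, m) ∈ ggMarks π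

instance (π : Partition) (x m : ℕ) : Decidable (Marked π x m) := by
  unfold Marked; infer_instance

/-- The `i`-th row of `GG(π)`: the `i`-marked parts, in decreasing order. -/
def row (π : Partition) (i : ℕ) : List ℕ :=
  ((ggMarks π).filter fun q => q.2 == i).map Prod.fst

/-- `N_i(π)`: the number of `i`-marked parts of `π`. -/
def Nmk (π : Partition) (i : ℕ) : ℕ := (row π i).length

/-- `π^{(i)}_j` as a natural number (meaningful for `1 ≤ j ≤ N_i(π)`;
junk value `0` otherwise). -/
def nth (π : Partition) (i j : ℕ) : ℕ := (row π i).getD (j - 1) 0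

/-- The canonical embedding of the natural numbers into `EReal`. -/
noncomputable def natE (n : ℕ) : EReal := ((n : ℝ) : EReal)

/-- `π^{(i)}_j` as an extended real, with the conventions `π^{(i)}_0 = +∞`
and `π^{(i)}_j = -∞` for `j > N_i(π)`. -/
noncomputable def rowVal (π : Partition) (i j : ℕ) : EReal :=
  if j = 0 then ⊤
  else
    match (row π i)[j - 1]? with
    | some x => natE x
    | none => ⊥

/-- The largest `l ≥ 0` such that there is no odd part of `π` greater than or
equal to `π^{(2)}_l` (the indices `1 ≤ j ≤ N₂(π)` with this property form an
initial segment, so this is also their number). -/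
def bigL (π : Partition) : ℕ :=
  ((List.range' 1 (Nmk π 2)).filter fun j =>
    decide (∀ x ∈ π.parts, x % 2 = 1 → x < nth π 2 j)).length

/-- `startPair π b = (starting type of π^{(2)}_b, s_b(π))` for `1 ≤ b ≤ N₂(π)`.
Starting types are encoded by integers: `-1` stands for `s₋₁`, and `0,1,2,3`
for `s₀,s₁,s₂,s₃`; the value `9` is a junk value used when no case applies. -/
def startPair (π : Partition) : ℕ → ℤ × ℕ
  | 0 => (9, 0)
  | b + 1 =>
    let v := nth π 2 (b + 1)
    if bigL π < b + 1 then (-1, 0)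
    else
      let okLow : Bool :=
        if b = 0 then !decide ((v + 2) ∈ π.parts)
        else !decide (Marked π (v + 2) 1) || decide ((startPair π b).2 = v + 2)
      let ok2 : Bool :=
        if b = 0 then decide (Marked π (v + 2) 1)
        else decide (Marked π (v + 2) 1) && !decide ((startPair π b).2 = v + 2)
      if decide (Marked π (v - 1) 1) && okLow then (0, v - 1)
      else if decide (Marked π (v - 2) 1) && okLow then (1, v - 2)
      else if ok2 then (2, v + 2)
      else if decide (Marked π v 1) then (3, v)
      else (9, 0)

/-- The starting type of `π^{(2)}_b`, encoded as an integer. -/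
def startType (π : Partition) (b : ℕ) : ℤ := (startPair π b).1

/-- The set `C(k,r)`: partitions with no repeated odd part, in which the parts
equal to `1` and `2` have marks at most `r - 1`, and whose Göllnitz–Gordon
marking has at most `k - 1` rows. -/
def C (k r : ℕ) : Set Partition :=
  { π | (∀ x, x % 2 = 1 → π.parts.count x ≤ 1) ∧
        (∀ x m, Marked π x m → x ≤ 2 → m ≤ r - 1) ∧
        (∀ x m, Marked π x m → m ≤ k - 1) }

/-- The set `C_<(k,r|p,t)`. -/
noncomputable def Clt (k r p t : ℕ) : Set Partition :=
  { π | π ∈ C k r ∧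
        (∀ x ∈ π.parts, x % 2 = 1 → x < 2 * t + 1) ∧
        rowVal π 2 (p + 1) < natE (2 * t + 1) ∧
        natE (2 * t + 1) < rowVal π 2 p ∧
        (rowVal π 2 p = natE (2 * t + 2) →
          startType π p = 2 ∨ startType π p = 3) ∧
        (rowVal π 2 (p + 1) = natE (2 * t) →
          startType π (p + 1) = 0 ∨ startType π (p + 1) = 1) }

/-- The set `C_=(k,r|p,t)`. -/
noncomputable def Ceq (k r p t : ℕ) : Set Partition :=
  { π | π ∈ C k r ∧
        (2 * t + 1) ∈ π.parts ∧
        (∀ x ∈ π.parts, x % 2 = 1 → x ≤ 2 * t + 1) ∧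
        (∀ m, Marked π (2 * t + 1) m → m ≤ 2) ∧
        natE (2 * t + 2) ≤ rowVal π 2 p ∧
        rowVal π 2 (p + 1) ≤ natE (2 * t + 2) ∧
        ((∃ j, 1 ≤ j ∧ j ≤ Nmk π 2 ∧ nth π 2 j = 2 * t + 2 ∧ startType π j = 0) →
          rowVal π 2 (p + 1) = natE (2 * t + 2) ∧
          ∃ i, 1 ≤ i ∧ i ≤ p + 1 ∧
            nth π 2 i = 2 * t + 2 + 4 * (p + 1 - i) ∧
            π.parts.count (2 * t + 2 + 4 * (p + 1 - i)) = 1) ∧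
        ((∃ j, 1 ≤ j ∧ j ≤ Nmk π 2 ∧ nth π 2 j = 2 * t + 2 ∧ startType π j = 2) →
          rowVal π 2 p = natE (2 * t + 2)) ∧
        ((2 * t + 2) ∈ π.parts → ¬ Marked π (2 * t + 2) 2 →
          rowVal π 2 p = natE (2 * t + 4) ∧ startType π p = 3 ∧
          ∃ i, 1 ≤ i ∧ i ≤ p ∧
            nth π 2 i = 2 * t + 4 + 4 * (p - i) ∧
            (2 * t + 4 + 4 * (p - i) + 2) ∉ π.parts) }

/-- The first starting cluster index `p₁` of `π` (with `p₀ = p + 1`): the least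
`j ≥ 1` such that `π^{(2)}_j = π^{(2)}_p + 4(p - j)` and all of
`π^{(2)}_j, …, π^{(2)}_p` have the same starting type as `π^{(2)}_p`. -/
def firstCluster (π : Partition) (p : ℕ) : ℕ :=
  ((List.range' 1 p).filter fun j =>
    (List.range' j (p + 1 - j)).all fun i =>
      decide (nth π 2 i = nth π 2 p + 4 * (p - i)) &&
      decide (startType π i = startType π p)).headD p

/-- The set `ℰ(k,r)` of partitions in `C(k,r)` with no odd parts. -/
def E (k r : ℕ) : Set Partition :=
  { π | π ∈ C k r ∧ ∀ x ∈ π.parts, x % 2 = 0 }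

/-- `C_<(k,r|m) = ⋃_{p+t=m} C_<(k,r|p,t)`. -/
noncomputable def Cltm (k r m : ℕ) : Set Partition :=
  { π | ∃ p t, p + t = m ∧ π ∈ Clt k r p t }

/-- `C_=(k,r|m) = ⋃_{p+t=m} C_=(k,r|p,t)`. -/
noncomputable def Ceqm (k r m : ℕ) : Set Partition :=
  { π | ∃ p t, p + t = m ∧ π ∈ Ceq k r p t }

/-- `I_N`: partitions into distinct odd parts, each at least `2N + 1`. -/
def Iset (N : ℕ) : Set Partition :=
  { ζ | (∀ x ∈ ζ.parts, x % 2 = 1 ∧ 2 * N + 1 ≤ x) ∧ ζ.parts.Nodup }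

/-- `F(3,3)`: pairs `(π, ζ)` with `π ∈ ℰ(3,3)` and `ζ ∈ I_{N₂(π)}`. -/
noncomputable def F33 : Set (Partition × Partition) :=
  { pq | pq.1 ∈ E 3 3 ∧ pq.2 ∈ Iset (Nmk pq.1 2) }


/-! ### Auxiliary lemmas -/

lemma mex1_pos (s : List ℕ) : 0 < mex1 s := (Nat.find_spec (exists_pos_not_mem s)).1

lemma mex1_not_mem (s : List ℕ) : mex1 s ∉ s := (Nat.find_spec (exists_pos_not_mem s)).2

lemma mem_of_lt_mex1 {s : List ℕ} {j : ℕ} (h0 : 0 < j) (h : j < mex1 s) : j ∈ s := by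
  by_contra hj
  exact Nat.find_min (exists_pos_not_mem s) h ⟨h0, hj⟩

lemma mex1_nil : mex1 [] = 1 :=
  le_antisymm (Nat.find_min' _ ⟨one_pos, by simp⟩) (mex1_pos [])

/-- The invariant satisfied by `ggMarks`: each mark is the `mex1` of the marks of
conflicting later (smaller) parts. -/
def GGGood : List (ℕ × ℕ) → Prop
  | [] => True
  | (x, m) :: B => m = mex1 ((B.filter fun q => conflict x q.1).map Prod.snd) ∧ GGGood B

lemma ggGood_ggAux (acc : List (ℕ × ℕ)) (l : List ℕ) (h : GGGood acc) : GGGood (ggAux acc l) := by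
  induction l generalizing acc with
  | nil => exact h
  | cons p rest ih => exact ih _ ⟨rfl, h⟩

lemma ggGood_ggMarks (π : Partition) : GGGood (ggMarks π) := ggGood_ggAux [] _ trivial

lemma GGGood.of_append {A B : List (ℕ × ℕ)} (h : GGGood (A ++ B)) : GGGood B := by
  induction A with
  | nil => exact h
  | cons a A ih => obtain ⟨x, m⟩ := a; exact ih h.2

lemma ggAux_map_fst (acc : List (ℕ × ℕ)) (l : List ℕ) :
    (ggAux acc l).map Prod.fst = l.reverse ++ acc.map Prod.fst := by
  induction l generalizing acc with
  | nil => simp [ggAux]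
  | cons p rest ih => simp [ggAux, ih]

lemma ggMarks_map_fst (π : Partition) : (ggMarks π).map Prod.fst = π.parts := by
  simp [ggMarks, ggAux_map_fst]

lemma ggMarks_sorted (π : Partition) :
    (ggMarks π).Pairwise (fun a b => b.1 ≤ a.1) := by
  have h := π.sorted
  rw [← ggMarks_map_fst π] at h
  exact (List.pairwise_map).1 h

lemma fst_mem_parts (π : Partition) {x m : ℕ} (h : (x, m) ∈ ggMarks π) : x ∈ π.parts := by
  rw [← ggMarks_map_fst]
  exact List.mem_map_of_mem h

lemma exists_mark (π : Partition) {x : ℕ} (h : x ∈ π.parts) : ∃ m, (x, m) ∈ ggMarks π := by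
  rw [← ggMarks_map_fst] at h
  obtain ⟨q, hq, he⟩ := List.mem_map.1 h
  exact ⟨q.2, by rwa [show (x, q.2) = q from Prod.ext he.symm rfl]⟩

lemma count_parts (π : Partition) (v : ℕ) :
    π.parts.count v = ((ggMarks π).map Prod.fst).count v := by rw [ggMarks_map_fst]

lemma mark_eq_of_split {A B : List (ℕ × ℕ)} {x m : ℕ} (h : GGGood (A ++ (x, m) :: B)) :
    m = mex1 ((B.filter fun q => conflict x q.1).map Prod.snd) := (h.of_append).1

lemma mark_ne_of_suffix {A B : List (ℕ × ℕ)} {x m y n : ℕ} (h : GGGood (A ++ (x, m) :: B))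
    (hy : (y, n) ∈ B) (hc : conflict x y = true) : m ≠ n := by
  intro he
  apply mex1_not_mem ((B.filter fun q => conflict x q.1).map Prod.snd)
  rw [← mark_eq_of_split h, he]
  exact List.mem_map_of_mem (List.mem_filter.2 ⟨hy, hc⟩)

lemma mark_pos' {l : List (ℕ × ℕ)} (hg : GGGood l) {x m : ℕ} (h : (x, m) ∈ l) : 0 < m := by
  obtain ⟨A, B, hs⟩ := List.append_of_mem h
  rw [hs] at hg
  rw [mark_eq_of_split hg]
  exact mex1_pos _

lemma mark_pos (π : Partition) {x m : ℕ} (h : (x, m) ∈ ggMarks π) : 0 < m :=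
  mark_pos' (ggGood_ggMarks π) h

lemma suffix_le {A B : List (ℕ × ℕ)} {x m : ℕ}
    (hsort : (A ++ (x, m) :: B).Pairwise (fun a b => b.1 ≤ a.1)) {q : ℕ × ℕ} (hq : q ∈ B) :
    q.1 ≤ x := by
  have h := (List.pairwise_append.1 hsort).2.1
  exact (List.pairwise_cons.1 h).1 q hq

/-- Two parts in conflict, with the first strictly larger, receive distinct marks. -/
lemma mark_ne_of_lt' {l : List (ℕ × ℕ)} (hg : GGGood l)
    (hs : l.Pairwise (fun a b => b.1 ≤ a.1)) {a b ma mb : ℕ}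
    (ha : (a, ma) ∈ l) (hb : (b, mb) ∈ l) (hba : b < a) (hc : conflict a b = true) :
    ma ≠ mb := by
  obtain ⟨A, B, hsplit⟩ := List.append_of_mem ha
  rw [hsplit] at hg hs hb
  have hbB : (b, mb) ∈ B := by
    rcases List.mem_append.1 hb with hA | hB
    · have h2 := (List.pairwise_append.1 hs).2.2 _ hA (a, ma) (by simp)
      have : a ≤ b := h2
      omega
    · rcases hB with _ | h
      · omega
      · assumption
  exact mark_ne_of_suffix hg hbB hc

lemma mark_ne_of_lt (π : Partition) {a b ma mb : ℕ}
    (ha : (a, ma) ∈ ggMarks π) (hb : (b, mb) ∈ ggMarks π) (hba : b < a)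
    (hc : conflict a b = true) : ma ≠ mb :=
  mark_ne_of_lt' (ggGood_ggMarks π) (ggMarks_sorted π) ha hb hba hc

lemma conflict_even {a b : ℕ} (ha : a % 2 = 0) (h : a - b ≤ 2) : conflict a b = true := by
  unfold conflict
  rw [if_neg (by omega)]
  exact decide_eq_true h

lemma conflict_odd {a b : ℕ} (ha : a % 2 = 1) (h : a - b < 2) : conflict a b = true := by
  unfold conflict
  rw [if_pos ha]
  exact decide_eq_true h

lemma conflict_odd_elim {a b : ℕ} (ha : a % 2 = 1) (h : conflict a b = true) : a - b < 2 := by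
  unfold conflict at h
  rw [if_pos ha] at h
  simpa using h

lemma conflict_false {a b : ℕ} (h : conflict a b = false) (hle : b ≤ a) : b + 2 ≤ a := by
  unfold conflict at h
  split at h <;> simp at h <;> omega

/-- Same-marked parts never conflict. -/
lemma ggGood_pairwise {l : List (ℕ × ℕ)} (h : GGGood l) :
    l.Pairwise (fun a b => a.2 = b.2 → conflict a.1 b.1 = false) := by
  induction l with
  | nil => simp
  | cons a B ih =>
    obtain ⟨x, m⟩ := a
    refine List.pairwise_cons.2 ⟨?_, ih h.2⟩
    intro b hb he
    by_contra hc
    have hc' : conflict x b.1 = true := by simpa using hc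
    have hmem : b.2 ∈ (B.filter fun q => conflict x q.1).map Prod.snd :=
      List.mem_map_of_mem (List.mem_filter.2 ⟨hb, hc'⟩)
    have hm : m = b.2 := he
    rw [← hm] at hmem
    exact mex1_not_mem _ (h.1 ▸ hmem)

/-! ### Rows and row values -/

lemma mem_row_iff (π : Partition) (i x : ℕ) : x ∈ row π i ↔ (x, i) ∈ ggMarks π := by
  unfold row
  constructor
  · intro h
    obtain ⟨q, hq, he⟩ := List.mem_map.1 h
    obtain ⟨hq1, hq2⟩ := List.mem_filter.1 hq
    have : q = (x, i) := Prod.ext he (by simpa using hq2)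
    rwa [this] at hq1
  · intro h
    exact List.mem_map_of_mem (List.mem_filter.2 ⟨h, by simp⟩)

/-- The second row of the marking is strictly decreasing, with gaps at least 2. -/
lemma row_two_pairwise (π : Partition) : (row π 2).Pairwise (fun x y => y + 2 ≤ x) := by
  have h1 := ggGood_pairwise (ggGood_ggMarks π)
  have h2 := ggMarks_sorted π
  have h3 := h2.and h1
  unfold row
  rw [List.pairwise_map]
  refine (h3.filter _).imp_of_mem ?_
  intro a b ha hb h
  have ha2 : a.2 = 2 := by simpa using (List.mem_filter.1 ha).2
  have hb2 : b.2 = 2 := by simpa using (List.mem_filter.1 hb).2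
  exact conflict_false (h.2 (ha2.trans hb2.symm)) h.1

lemma row_two_strict (π : Partition) {i j : ℕ} (hi : i < (row π 2).length)
    (hj : j < (row π 2).length) (hij : i < j) :
    (row π 2)[j] + 2 ≤ (row π 2)[i] := by
  have := List.pairwise_iff_get.1 (row_two_pairwise π) ⟨i, hi⟩ ⟨j, hj⟩ hij
  simpa using this

lemma natE_le_natE {a b : ℕ} : natE a ≤ natE b ↔ a ≤ b := by
  unfold natE
  rw [EReal.coe_le_coe_iff]
  exact_mod_cast Iff.rfl

lemma natE_eq_natE {a b : ℕ} : natE a = natE b ↔ a = b := by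
  constructor
  · intro h
    exact le_antisymm (natE_le_natE.1 h.le) (natE_le_natE.1 h.ge)
  · rintro rfl; rfl

lemma natE_ne_bot (a : ℕ) : natE a ≠ ⊥ := by
  unfold natE; exact EReal.coe_ne_bot _

lemma natE_ne_top (a : ℕ) : natE a ≠ ⊤ := by
  unfold natE; exact EReal.coe_ne_top _

lemma rowVal_zero (π : Partition) (i : ℕ) : rowVal π i 0 = ⊤ := by simp [rowVal]

lemma rowVal_of_lt (π : Partition) {i j : ℕ} (h1 : 1 ≤ j) (h2 : j - 1 < (row π i).length) :
    rowVal π i j = natE ((row π i)[j - 1]) := by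
  unfold rowVal
  rw [if_neg (by omega), List.getElem?_eq_getElem h2]

lemma rowVal_of_ge (π : Partition) {i j : ℕ} (h1 : 1 ≤ j) (h2 : (row π i).length ≤ j - 1) :
    rowVal π i j = ⊥ := by
  unfold rowVal
  rw [if_neg (by omega), List.getElem?_eq_none h2]

lemma nth_eq (π : Partition) {i j : ℕ} (h2 : j - 1 < (row π i).length) :
    nth π i j = (row π i)[j - 1] := by
  unfold nth
  exact List.getD_eq_getElem _ _ h2

lemma Nmk_eq (π : Partition) (i : ℕ) : Nmk π i = (row π i).length := rfl

/-- Cutting a strictly decreasing list at a value. -/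
lemma exists_cut (l : List ℕ) (hl : l.Pairwise (fun x y => y + 2 ≤ x)) (v : ℕ) :
    ∃ p, p ≤ l.length ∧ (∀ i, (h : i < l.length) → i < p → v ≤ l[i]) ∧
      (∀ i, (h : i < l.length) → p ≤ i → l[i] < v) := by
  induction l with
  | nil => exact ⟨0, by simp, by simp, by simp⟩
  | cons x xs ih =>
    have hx : ∀ y ∈ xs, y + 2 ≤ x := (List.pairwise_cons.1 hl).1
    obtain ⟨p, hp, h1, h2⟩ := ih (List.pairwise_cons.1 hl).2
    by_cases hv : v ≤ x
    · refine ⟨p + 1, by simpa using hp, ?_, ?_⟩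
      · rintro (_ | i) h hip
        · simpa using hv
        · have hix : i < xs.length := by simpa using h
          simpa using h1 i hix (by omega)
      · rintro (_ | i) h hip
        · omega
        · have hix : i < xs.length := by simpa using h
          simpa using h2 i hix (by omega)
    · refine ⟨0, by simp, by omega, ?_⟩
      rintro (_ | i) h _
      · simpa using (by omega : x < v)
      · have hix : i < xs.length := by simpa using h
        have hmem : xs[i] ∈ xs := List.getElem_mem _
        have := hx _ hmem
        simpa using (by omega : xs[i] < v)

lemma exists_max_odd (l : List ℕ) (h : ∃ x ∈ l, x % 2 = 1) :
    ∃ x ∈ l, x % 2 = 1 ∧ ∀ y ∈ l, y % 2 = 1 → y ≤ x := by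
  induction l with
  | nil => simp at h
  | cons a l ih =>
    by_cases hl : ∃ x ∈ l, x % 2 = 1
    · obtain ⟨x, hx, hx1, hmax⟩ := ih hl
      by_cases ha : a % 2 = 1 ∧ x ≤ a
      · refine ⟨a, by simp, ha.1, ?_⟩
        intro y hy h1
        rcases List.mem_cons.1 hy with rfl | hy
        · exact le_refl y
        · exact le_trans (hmax y hy h1) ha.2
      · refine ⟨x, by simp [hx], hx1, ?_⟩
        intro y hy h1
        rcases List.mem_cons.1 hy with rfl | hy
        · by_contra hc
          exact ha ⟨h1, by omega⟩
        · exact hmax y hy h1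
    · obtain ⟨x, hx, hx1⟩ := h
      rcases List.mem_cons.1 hx with rfl | hx
      · refine ⟨x, by simp, hx1, ?_⟩
        intro y hy h1
        rcases List.mem_cons.1 hy with rfl | hy
        · exact le_refl y
        · exact absurd ⟨y, hy, h1⟩ hl
      · exact absurd ⟨x, hx, hx1⟩ hl

lemma two_copies {l : List (ℕ × ℕ)} {v : ℕ} (h : 2 ≤ (l.map Prod.fst).count v) :
    ∃ A m B n, l = A ++ (v, m) :: B ∧ (v, n) ∈ B := by
  induction l with
  | nil => simp at h
  | cons a l ih =>
    rw [List.map_cons, List.count_cons] at h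
    by_cases ha : a.1 = v
    · have hb : (a.1 == v) = true := beq_iff_eq.2 ha
      have h1 : 0 < (l.map Prod.fst).count v := by
        rw [if_pos hb] at h; omega
      have hv : v ∈ l.map Prod.fst := List.count_pos_iff.1 h1
      obtain ⟨q, hq, hqv⟩ := List.mem_map.1 hv
      refine ⟨[], a.2, l, q.2, ?_, ?_⟩
      · simp [← ha]
      · rwa [show (v, q.2) = q from Prod.ext hqv.symm rfl]
    · have hb : (a.1 == v) = false := by simpa using ha
      rw [hb] at h
      simp at h
      obtain ⟨A, m, B, n, he, hn⟩ := ih h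
      exact ⟨a :: A, m, B, n, by rw [he]; rfl, hn⟩

/-! ### Specific facts about the marking near the largest odd part -/

lemma not_both {π : Partition} {t : ℕ} (hπ : π ∈ C 3 3) (h1 : 2*t+1 ∈ π.parts)
    (h0 : 2*t ∈ π.parts) (h2 : 2*t+2 ∈ π.parts) : False := by
  obtain ⟨m2, hm2⟩ := exists_mark π h2
  obtain ⟨m1, hm1⟩ := exists_mark π h1
  obtain ⟨m0, hm0⟩ := exists_mark π h0
  have e21 : m2 ≠ m1 := mark_ne_of_lt π hm2 hm1 (by omega) (conflict_even (by omega) (by omega))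
  have e20 : m2 ≠ m0 := mark_ne_of_lt π hm2 hm0 (by omega) (conflict_even (by omega) (by omega))
  have e10 : m1 ≠ m0 := mark_ne_of_lt π hm1 hm0 (by omega) (conflict_odd (by omega) (by omega))
  have b2 := hπ.2.2 _ _ hm2
  have b1 := hπ.2.2 _ _ hm1
  have b0 := hπ.2.2 _ _ hm0
  have p2 := mark_pos π hm2
  have p1 := mark_pos π hm1
  have p0 := mark_pos π hm0
  omega

lemma mark_odd_one {π : Partition} {t : ℕ} (hπ : π ∈ C 3 3) (h1 : 2*t+1 ∈ π.parts)
    (h0 : 2*t ∉ π.parts) : (2*t+1, 1) ∈ ggMarks π := by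
  obtain ⟨m, hm⟩ := exists_mark π h1
  suffices hs : m = 1 by rwa [hs] at hm
  obtain ⟨A, B, hsp⟩ := List.append_of_mem hm
  have hg := ggGood_ggMarks π
  have hsort := ggMarks_sorted π
  rw [hsp] at hg hsort
  have hfil : B.filter (fun q => conflict (2*t+1) q.1) = [] := by
    rw [List.filter_eq_nil_iff]
    intro q hq hc
    have hy : q.1 ≤ 2*t+1 := suffix_le hsort hq
    have hlt : 2*t+1 - q.1 < 2 := conflict_odd_elim (by omega) hc
    have hqp : q.1 ∈ π.parts := by
      refine fst_mem_parts π (x := q.1) (m := q.2) ?_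
      rw [hsp]
      exact List.mem_append_right _ (List.mem_cons_of_mem _ hq)
    rcases (by omega : q.1 = 2*t ∨ q.1 = 2*t+1) with he | he
    · exact h0 (he ▸ hqp)
    · have hBcnt : 0 < (B.map Prod.fst).count (2*t+1) :=
        List.count_pos_iff.2 (by rw [← he]; exact List.mem_map_of_mem hq)
      have h2c : 2 ≤ π.parts.count (2*t+1) := by
        rw [count_parts, hsp, List.map_append, List.map_cons, List.count_append,
          List.count_cons_self]
        omega
      have := hπ.1 (2*t+1) (by omega)
      omega
  rw [mark_eq_of_split hg, hfil]
  exact mex1_nil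

lemma count22_eq_one {π : Partition} {t : ℕ} (hπ : π ∈ C 3 3) (h1 : 2*t+1 ∈ π.parts)
    (h2 : 2*t+2 ∈ π.parts) : π.parts.count (2*t+2) = 1 := by
  have hge : 0 < π.parts.count (2*t+2) := List.count_pos_iff.2 h2
  by_contra hc
  have h2c : 2 ≤ ((ggMarks π).map Prod.fst).count (2*t+2) := by
    rw [← count_parts]; omega
  obtain ⟨A, m, B, n, hsp, hnB⟩ := two_copies h2c
  have hg := ggGood_ggMarks π
  have hsort := ggMarks_sorted π
  rw [hsp] at hg hsort
  obtain ⟨m1, hm1⟩ := exists_mark π h1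
  have hm1B : (2*t+1, m1) ∈ B := by
    have hm1' := hm1
    rw [hsp] at hm1'
    rcases List.mem_append.1 hm1' with hA | hB
    · have h2' := (List.pairwise_append.1 hsort).2.2 _ hA (2*t+2, m) (by simp)
      have h'' : (2*t+2 : ℕ) ≤ 2*t+1 := h2'
      omega
    · rcases List.mem_cons.1 hB with he | hB
      · have : 2*t+1 = 2*t+2 := congrArg Prod.fst he
        omega
      · exact hB
  have e1 : m ≠ n := mark_ne_of_suffix hg hnB (conflict_even (by omega) (by omega))
  have e2 : m ≠ m1 := mark_ne_of_suffix hg hm1B (conflict_even (by omega) (by omega))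
  have hgB : GGGood ((2*t+2, m) :: B) := hg.of_append
  have hsB : ((2*t+2, m) :: B).Pairwise (fun a b => b.1 ≤ a.1) :=
    (List.pairwise_append.1 hsort).2.1
  have e3 : n ≠ m1 := mark_ne_of_lt' hgB.2 (List.pairwise_cons.1 hsB).2 hnB hm1B (by omega)
    (conflict_even (by omega) (by omega))
  have hmemm : (2*t+2, m) ∈ ggMarks π := by
    rw [hsp]; exact List.mem_append_right _ (List.mem_cons_self)
  have hmemn : (2*t+2, n) ∈ ggMarks π := by
    rw [hsp]; exact List.mem_append_right _ (List.mem_cons_of_mem _ hnB)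
  have bm := hπ.2.2 _ _ hmemm
  have bn := hπ.2.2 _ _ hmemn
  have b1 := hπ.2.2 _ _ hm1
  have pm := mark_pos π hmemm
  have pn := mark_pos π hmemn
  have p1 := mark_pos π hm1
  omega

lemma marked22 {π : Partition} {t : ℕ} (hπ : π ∈ C 3 3) (h1 : 2*t+1 ∈ π.parts)
    (h2 : 2*t+2 ∈ π.parts) : (2*t+2, 2) ∈ ggMarks π := by
  have h0 : 2*t ∉ π.parts := fun h0 => not_both hπ h1 h0 h2
  have hm1 := mark_odd_one hπ h1 h0
  obtain ⟨m, hm⟩ := exists_mark π h2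
  have hne : m ≠ 1 := mark_ne_of_lt π hm hm1 (by omega) (conflict_even (by omega) (by omega))
  have hb := hπ.2.2 _ _ hm
  have hp := mark_pos π hm
  have : m = 2 := by omega
  rwa [this] at hm

lemma marked24 {π : Partition} {t : ℕ} (hπ : π ∈ C 3 3) (h1 : 2*t+1 ∈ π.parts)
    (h2 : 2*t+2 ∈ π.parts) (h4 : 2*t+4 ∈ π.parts) : (2*t+4, 1) ∈ ggMarks π := by
  have hm2 := marked22 hπ h1 h2
  obtain ⟨m, hm⟩ := exists_mark π h4
  have hne : m ≠ 2 := mark_ne_of_lt π hm hm2 (by omega) (conflict_even (by omega) (by omega))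
  have hb := hπ.2.2 _ _ hm
  have hp := mark_pos π hm
  have : m = 1 := by omega
  rwa [this] at hm

lemma bigL_ge {π : Partition} {t q : ℕ}
    (hmax : ∀ x ∈ π.parts, x % 2 = 1 → x ≤ 2*t+1)
    (hq : q ≤ Nmk π 2) (hval : ∀ j, 1 ≤ j → j ≤ q → 2*t+2 ≤ nth π 2 j) :
    q ≤ bigL π := by
  unfold bigL
  have hsplit : List.range' 1 q ++ List.range' (1+q) (Nmk π 2 - q) = List.range' 1 (Nmk π 2) := by
    have h : List.range' 1 q 1 ++ List.range' (1 + 1 * q) (Nmk π 2 - q) 1 =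
        List.range' 1 (q + (Nmk π 2 - q)) 1 := List.range'_append
    simp only [one_mul] at h
    rw [h]
    congr 1
    omega
  rw [← hsplit, List.filter_append, List.length_append]
  have hfe : (List.range' 1 q).filter
      (fun j => decide (∀ x ∈ π.parts, x % 2 = 1 → x < nth π 2 j)) = List.range' 1 q := by
    rw [List.filter_eq_self]
    intro j hj
    have hj' : 1 ≤ j ∧ j < 1 + q := List.mem_range'_1.1 hj
    refine decide_eq_true ?_
    intro x hx hx1
    have hle := hmax x hx hx1
    have hge := hval j hj'.1 (by omega)
    omega
  rw [hfe, List.length_range']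
  omega

lemma startType_q {π : Partition} {t q : ℕ} (hπ : π ∈ C 3 3) (h1 : 2*t+1 ∈ π.parts)
    (hmax : ∀ x ∈ π.parts, x % 2 = 1 → x ≤ 2*t+1)
    (hq1 : 1 ≤ q) (hq2 : q ≤ Nmk π 2) (hval : nth π 2 q = 2*t+2)
    (hmono : ∀ j, 1 ≤ j → j ≤ q → 2*t+2 ≤ nth π 2 j) :
    startType π q = 0 ∨ startType π q = 2 := by
  have hqlen : q - 1 < (row π 2).length := by
    rw [Nmk_eq] at hq2; omega
  have h22 : (2*t+2) ∈ π.parts := by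
    have hmem : nth π 2 q ∈ row π 2 := by
      rw [nth_eq π hqlen]
      exact List.getElem_mem _
    rw [hval] at hmem
    exact fst_mem_parts π ((mem_row_iff π 2 _).1 hmem)
  have h0 : 2*t ∉ π.parts := fun h0 => not_both hπ h1 h0 h22
  have hM1 : Marked π (2*t+1) 1 := mark_odd_one hπ h1 h0
  have hbig : ¬ (bigL π < q) := by
    have := bigL_ge hmax hq2 hmono
    omega
  obtain ⟨b, rfl⟩ : ∃ b, q = b + 1 := ⟨q - 1, by omega⟩
  have e1 : 2*t+2-1 = 2*t+1 := by omega
  have e2 : 2*t+2+2 = 2*t+4 := by omega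
  rcases Nat.eq_zero_or_pos b with rfl | hb
  · by_cases h24 : (2*t+4) ∈ π.parts
    · have hMk24 : Marked π (2*t+4) 1 := marked24 hπ h1 h22 h24
      refine Or.inr ?_
      simp [startType, startPair, hbig, hval, e1, e2, h24, hM1, hMk24]
    · refine Or.inl ?_
      simp [startType, startPair, hbig, hval, e1, e2, h24, hM1]
  · have hb0 : ¬ (b = 0) := by omega
    by_cases hA : Marked π (2*t+4) 1
    · by_cases hB : (startPair π b).2 = 2*t+4
      · refine Or.inl ?_
        simp [startType, startPair, hbig, hval, e1, e2, hb0, hA, hB, hM1]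
      · refine Or.inr ?_
        simp [startType, startPair, hbig, hval, e1, e2, hb0, hA, hB, hM1]
    · refine Or.inl ?_
      simp [startType, startPair, hbig, hval, e1, e2, hb0, hA, hM1]

lemma ceq_not_lt {π : Partition} {t p p' : ℕ} (hπ : π ∈ C 3 3)
    (h1 : 2*t+1 ∈ π.parts) (hmax : ∀ x ∈ π.parts, x % 2 = 1 → x ≤ 2*t+1)
    (hp : π ∈ Ceq 3 3 p t) (hp' : π ∈ Ceq 3 3 p' t) (hlt : p < p') : False := by
  obtain ⟨-, -, -, -, hge', hle', h4', -, -⟩ := hp'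
  obtain ⟨-, -, -, -, hge, hle, -, h5, -⟩ := hp
  have hp'1 : 1 ≤ p' := by omega
  have hlen : p' - 1 < (row π 2).length := by
    by_contra hcon
    rw [rowVal_of_ge π hp'1 (by omega)] at hge'
    exact absurd (le_bot_iff.1 hge') (natE_ne_bot _)
  have hval' : 2*t+2 ≤ (row π 2)[p'-1] := by
    rw [rowVal_of_lt π hp'1 (by omega)] at hge'
    exact natE_le_natE.1 hge'
  have hplen : p < (row π 2).length := by omega
  have hvp : (row π 2)[p] ≤ 2*t+2 := by
    rw [rowVal_of_lt π (by omega) (by simp only [Nat.add_sub_cancel]; omega)] at hle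
    simp only [Nat.add_sub_cancel] at hle
    exact natE_le_natE.1 hle
  have heq : p' - 1 = p := by
    by_contra hne
    have hlt2 : p < p' - 1 := by omega
    have := row_two_strict π hplen hlen hlt2
    omega
  simp only [heq] at hval' hlen
  have hvalp : (row π 2)[p] = 2*t+2 := by omega
  have hnth : nth π 2 p' = 2*t+2 := by
    rw [nth_eq π (by simp only [heq]; omega)]
    simp only [heq]
    exact hvalp
  have hmono : ∀ j, 1 ≤ j → j ≤ p' → 2*t+2 ≤ nth π 2 j := by
    intro j hj1 hj2
    have hjlen : j - 1 < (row π 2).length := by omega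
    rw [nth_eq π hjlen]
    rcases eq_or_lt_of_le hj2 with rfl | hjlt
    · have : j - 1 = p := by omega
      simp only [this]
      omega
    · have := row_two_strict π hjlen hplen (by omega)
      omega
  have hst := startType_q hπ h1 hmax hp'1 (by rw [Nmk_eq]; omega) hnth hmono
  rcases hst with h0 | h2
  · obtain ⟨hA, -⟩ := h4' ⟨p', hp'1, by rw [Nmk_eq]; omega, hnth, h0⟩
    by_cases hcase : p' < (row π 2).length
    · rw [rowVal_of_lt π (by omega) (by simp only [Nat.add_sub_cancel]; omega)] at hA
      simp only [Nat.add_sub_cancel] at hA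
      have hAe := natE_eq_natE.1 hA
      have hstrict := row_two_strict π hplen hcase (by omega)
      omega
    · rw [rowVal_of_ge π (by omega) (by simp only [Nat.add_sub_cancel]; omega)] at hA
      exact natE_ne_bot _ hA.symm
  · have hB := h5 ⟨p', hp'1, by rw [Nmk_eq]; omega, hnth, h2⟩
    rcases Nat.eq_zero_or_pos p with rfl | hppos
    · rw [rowVal_zero] at hB
      exact natE_ne_top _ hB.symm
    · have hplen2 : p - 1 < (row π 2).length := by omega
      rw [rowVal_of_lt π (by omega) hplen2] at hB
      have hBe := natE_eq_natE.1 hB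
      have hstrict := row_two_strict π hplen2 hplen (by omega)
      omega
/-- Theorem 5.4: a partition in `C(3,3)` with at least one odd part lies in
`C_=(3,3|m)` for a unique `m`. -/
theorem Ceqm_exists_unique (π : Partition) (hπ : π ∈ C 3 3)
    (hodd : ∃ x ∈ π.parts, x % 2 = 1) :
    ∃! m : ℕ, π ∈ Ceqm 3 3 m := by
  classical
  obtain ⟨M, hM, hModd, hMmax⟩ := exists_max_odd _ hodd
  obtain ⟨t, rfl⟩ : ∃ t, M = 2*t+1 := ⟨M/2, by omega⟩
  have hmax : ∀ x ∈ π.parts, x % 2 = 1 → x ≤ 2*t+1 := hMmax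
  have hpw := row_two_pairwise π
  have hmarkle : ∀ m, Marked π (2*t+1) m → m ≤ 2 := fun m hm => hπ.2.2 _ _ hm
  -- existence of a suitable `p`
  have hex : ∃ p, π ∈ Ceq 3 3 p t := by
    by_cases hmk : (2*t+2, 2) ∈ ggMarks π
    · -- there is a 2-marked 2t+2, at (1-based) index q
      obtain ⟨qi, hqi, hqval⟩ := List.mem_iff_getElem.1 ((mem_row_iff π 2 _).2 hmk)
      have hqlen : (qi + 1) - 1 < (row π 2).length := by omega
      have hnth : nth π 2 (qi + 1) = 2*t+2 := by
        rw [nth_eq π hqlen]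
        simpa using hqval
      have h22 : (2*t+2) ∈ π.parts := fst_mem_parts π hmk
      have hcnt1 : π.parts.count (2*t+2) = 1 := count22_eq_one hπ hM h22
      have hmono : ∀ j, 1 ≤ j → j ≤ qi + 1 → 2*t+2 ≤ nth π 2 j := by
        intro j hj1 hj2
        have hjlen : j - 1 < (row π 2).length := by omega
        rw [nth_eq π hjlen]
        rcases eq_or_lt_of_le hj2 with rfl | hjlt
        · simp only [Nat.add_sub_cancel, hqval]
          omega
        · have := row_two_strict π hjlen (show qi < (row π 2).length from hqi) (by omega)
          omega
      have huniq : ∀ j, 1 ≤ j → j ≤ Nmk π 2 → nth π 2 j = 2*t+2 → j = qi + 1 := by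
        intro j hj1 hj2 hj3
        rw [Nmk_eq] at hj2
        have hjlen : j - 1 < (row π 2).length := by omega
        rw [nth_eq π hjlen] at hj3
        by_contra hne
        rcases lt_or_gt_of_ne (show j - 1 ≠ qi by omega) with h | h
        · have := row_two_strict π hjlen hqi h
          omega
        · have := row_two_strict π hqi hjlen h
          omega
      have hst := startType_q hπ hM hmax (by omega) (by rw [Nmk_eq]; omega) hnth hmono
      rcases hst with h0 | h2
      · -- starting type s₀ : take p = qi
        refine ⟨qi, hπ, hM, hmax, hmarkle, ?_, ?_, ?_, ?_, ?_⟩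
        · -- natE (2t+2) ≤ rowVal π 2 qi
          rcases Nat.eq_zero_or_pos qi with rfl | hqpos
          · rw [rowVal_zero]; exact le_top
          · rw [rowVal_of_lt π (by omega) (by omega)]
            refine natE_le_natE.2 ?_
            have := row_two_strict π (show qi - 1 < (row π 2).length by omega) hqi (by omega)
            omega
        · rw [rowVal_of_lt π (by omega) (by simpa using hqlen)]
          simp only [Nat.add_sub_cancel, hqval]
          exact le_refl _
        · rintro -
          constructor
          · rw [rowVal_of_lt π (by omega) (by simpa using hqlen)]
            simp only [Nat.add_sub_cancel, hqval]
          · refine ⟨qi + 1, by omega, le_refl _, ?_, ?_⟩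
            · have hz : qi + 1 - (qi + 1) = 0 := by omega
              rw [hz]
              simpa using hnth
            · have hz : qi + 1 - (qi + 1) = 0 := by omega
              rw [hz]
              simpa using hcnt1
        · rintro ⟨j, hj1, hj2, hj3, hj4⟩
          have := huniq j hj1 hj2 hj3
          subst this
          rw [h0] at hj4
          exact absurd hj4 (by decide)
        · intro _ h6b
          exact absurd hmk h6b
      · -- starting type s₂ : take p = qi + 1
        refine ⟨qi + 1, hπ, hM, hmax, hmarkle, ?_, ?_, ?_, ?_, ?_⟩
        · rw [rowVal_of_lt π (by omega) hqlen]
          simp only [Nat.add_sub_cancel, hqval]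
          exact le_refl _
        · by_cases hcase : qi + 1 < (row π 2).length
          · rw [rowVal_of_lt π (by omega) (by simpa using hcase)]
            simp only [Nat.add_sub_cancel]
            refine natE_le_natE.2 ?_
            have := row_two_strict π hqi hcase (by omega)
            omega
          · rw [rowVal_of_ge π (by omega) (by simp only [Nat.add_sub_cancel]; omega)]
            exact bot_le
        · rintro ⟨j, hj1, hj2, hj3, hj4⟩
          have := huniq j hj1 hj2 hj3
          subst this
          rw [h2] at hj4
          exact absurd hj4 (by decide)
        · rintro -
          rw [rowVal_of_lt π (by omega) hqlen]
          simp only [Nat.add_sub_cancel, hqval]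
        · intro _ h6b
          exact absurd hmk h6b
    · -- no 2-marked 2t+2, hence 2t+2 is not a part at all
      have h22 : (2*t+2) ∉ π.parts := fun h => hmk (marked22 hπ hM h)
      have hno : ∀ j, 1 ≤ j → j ≤ Nmk π 2 → nth π 2 j ≠ 2*t+2 := by
        intro j hj1 hj2 hj3
        rw [Nmk_eq] at hj2
        have hjlen : j - 1 < (row π 2).length := by omega
        rw [nth_eq π hjlen] at hj3
        have hmem : (2*t+2 : ℕ) ∈ row π 2 := by
          rw [← hj3]; exact List.getElem_mem _
        exact hmk ((mem_row_iff π 2 _).1 hmem)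
      obtain ⟨p0, hp0len, hcut1, hcut2⟩ := exists_cut (row π 2) hpw (2*t+2)
      refine ⟨p0, hπ, hM, hmax, hmarkle, ?_, ?_, ?_, ?_, ?_⟩
      · rcases Nat.eq_zero_or_pos p0 with rfl | hppos
        · rw [rowVal_zero]; exact le_top
        · rw [rowVal_of_lt π (by omega) (by omega)]
          exact natE_le_natE.2 (hcut1 (p0-1) (by omega) (by omega))
      · by_cases hcase : p0 < (row π 2).length
        · rw [rowVal_of_lt π (by omega) (by simp only [Nat.add_sub_cancel]; omega)]
          simp only [Nat.add_sub_cancel]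
          exact natE_le_natE.2 (le_of_lt (hcut2 p0 hcase (le_refl _)))
        · rw [rowVal_of_ge π (by omega) (by simp only [Nat.add_sub_cancel]; omega)]
          exact bot_le
      · rintro ⟨j, hj1, hj2, hj3, -⟩
        exact absurd hj3 (hno j hj1 hj2)
      · rintro ⟨j, hj1, hj2, hj3, -⟩
        exact absurd hj3 (hno j hj1 hj2)
      · intro h6a
        exact absurd h6a h22
  -- assemble
  obtain ⟨P, hP⟩ := hex
  refine ⟨P + t, ⟨P, t, rfl, hP⟩, ?_⟩
  rintro m' ⟨p', t', rfl, hm'⟩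
  have ht' : t' = t := by
    obtain ⟨-, hmem', hmax', -, -, -, -, -, -⟩ := hm'
    have a1 := hmax' (2*t+1) hM (by omega)
    have a2 := hmax (2*t'+1) hmem' (by omega)
    omega
  subst ht'
  rcases lt_trichotomy p' P with h | rfl | h
  · exact (ceq_not_lt hπ hM hmax hm' hP h).elim
  · rfl
  · exact (ceq_not_lt hπ hM hmax hP hm' h).elim

end Bressoud
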